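/- Let G be an étale groupoid, A a right G-space with a proper action, and B a Hausdorff left G-space. Then the diagonal G-action on A ×_{s,G⁰,r} B defined by g·(a,b) = (a·g⁻¹, g·b) is proper. -/
import Mathlib


open Topology

/-- An étale topological groupoid, given by its arrow space `A` and object space `O`. -/
structure EtaleGroupoid (A O : Type) [TopologicalSpace A] [TopologicalSpace O] where
  r : A → O
  s : A → O
  unit : O → A
  mul : A → A → A
  inv : A → A
  r_unit : ∀ o, r (unit o) = o
  s_unit : ∀ o, s (unit o) = o
  r_mul : ∀ g h, s g = r h → r (mul g h) = r g
  s_mul : ∀ g h, s g = r h → s (mul g h) = s h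
  mul_assoc : ∀ g h k, s g = r h → s h = r k → mul (mul g h) k = mul g (mul h k)
  unit_mul : ∀ g, mul (unit (r g)) g = g
  mul_unit : ∀ g, mul g (unit (s g)) = g
  r_inv : ∀ g, r (inv g) = s g
  s_inv : ∀ g, s (inv g) = r g
  mul_inv : ∀ g, mul g (inv g) = unit (r g)
  inv_mul : ∀ g, mul (inv g) g = unit (s g)
  etale_r : IsLocalHomeomorph r
  etale_s : IsLocalHomeomorph s
  continuous_mul : Continuous fun p : { p : A × A // s p.1 = r p.2 } => mul p.1.1 p.1.2
  continuous_inv : Continuous inv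

variable {A O : Type} [TopologicalSpace A] [TopologicalSpace O]

/-- A right action of an étale groupoid on a topological space `X`. -/
structure RightAction (G : EtaleGroupoid A O) (X : Type) [TopologicalSpace X] where
  anchor : X → O
  act : X → A → X
  continuous_anchor : Continuous anchor
  continuous_act :
    Continuous fun p : { p : X × A // anchor p.1 = G.r p.2 } => act p.1.1 p.1.2
  anchor_act : ∀ x g, anchor x = G.r g → anchor (act x g) = G.s g
  act_mul : ∀ x g h, anchor x = G.r g → G.s g = G.r h →
    act (act x g) h = act x (G.mul g h)
  act_unit : ∀ x, act x (G.unit (anchor x)) = x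

/-- A left action of an étale groupoid on a topological space `X`. -/
structure LeftAction (G : EtaleGroupoid A O) (X : Type) [TopologicalSpace X] where
  anchor : X → O
  act : A → X → X
  continuous_anchor : Continuous anchor
  continuous_act :
    Continuous fun p : { p : A × X // G.s p.1 = anchor p.2 } => act p.1.1 p.1.2
  anchor_act : ∀ g x, G.s g = anchor x → anchor (act g x) = G.r g
  mul_act : ∀ g h x, G.s g = G.r h → G.s h = anchor x →
    act g (act h x) = act (G.mul g h) x
  unit_act : ∀ x, act (G.unit (anchor x)) x = x

namespace RightAction

variable {G : EtaleGroupoid A O} {X : Type} [TopologicalSpace X]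

/-- The map `(x, g) ↦ (x·g, x)` on the fibre product `X ×_{s,G⁰,r} G`. -/
def pairMap (ρ : RightAction G X) :
    { p : X × A // ρ.anchor p.1 = G.r p.2 } → X × X :=
  fun p => (ρ.act p.1.1 p.1.2, p.1.1)

/-- The action is *basic* if `pairMap` is a homeomorphism onto its image. -/
def IsBasic (ρ : RightAction G X) : Prop := Topology.IsEmbedding ρ.pairMap

/-- The action is *free* if `pairMap` is injective. -/
def IsFree (ρ : RightAction G X) : Prop := Function.Injective ρ.pairMap

/-- The action is *proper* if `pairMap` is a proper map. -/
def IsProper (ρ : RightAction G X) : Prop := IsProperMap ρ.pairMap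

/-- Two points are orbit equivalent if one is a translate of the other. -/
def OrbitRel (ρ : RightAction G X) (x y : X) : Prop :=
  ∃ g, ρ.anchor x = G.r g ∧ y = ρ.act x g

/-- The orbit space `X/G`, with the quotient topology. -/
def OrbitSpace (ρ : RightAction G X) : Type := Quot ρ.OrbitRel

instance (ρ : RightAction G X) : TopologicalSpace ρ.OrbitSpace :=
  instTopologicalSpaceQuot

/-- The orbit space projection `p : X → X/G`. -/
def orbitMap (ρ : RightAction G X) : X → ρ.OrbitSpace := Quot.mk _

end RightAction

variable {AH OH : Type} [TopologicalSpace AH] [TopologicalSpace OH]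

/-- A groupoid correspondence `X : H ← G`: commuting left `H`- and right `G`-actions
such that the right anchor map is a local homeomorphism and the right action is free
and proper. -/
structure Correspondence (H : EtaleGroupoid AH OH) (G : EtaleGroupoid A O)
    (X : Type) [TopologicalSpace X] where
  left : LeftAction H X
  right : RightAction G X
  sInv_left : ∀ h x, H.s h = left.anchor x →
    right.anchor (left.act h x) = right.anchor x
  rInv_right : ∀ x g, right.anchor x = G.r g →
    left.anchor (right.act x g) = left.anchor x
  comm : ∀ h x g, H.s h = left.anchor x → right.anchor x = G.r g →
    left.act h (right.act x g) = right.act (left.act h x) g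
  etale_s : IsLocalHomeomorph right.anchor
  free : right.IsFree
  proper : right.IsProper

namespace Correspondence

variable {H : EtaleGroupoid AH OH} {G : EtaleGroupoid A O}
  {X : Type} [TopologicalSpace X]

/-- The map `r_* : X/G → H⁰` induced by the left anchor map. -/
def rStar (C : Correspondence H G X) : C.right.OrbitSpace → OH :=
  Quot.lift C.left.anchor (by
    rintro x y ⟨g, hg, rfl⟩
    exact (C.rInv_right x g hg).symm)

end Correspondence
section Statement8

variable {A O Aᵣ B : Type} [TopologicalSpace A] [TopologicalSpace O]
  [TopologicalSpace Aᵣ] [TopologicalSpace B]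
  {G : EtaleGroupoid A O}

/-- The map witnessing properness of the diagonal `G`-action
`g·(a,b) = (a·g⁻¹, g·b)` on the fibre product `A ×_{s,G⁰,r} B`:
`(g,a,b) ↦ ((a·g⁻¹, g·b), (a,b))`. -/
def diagonalPairMap (ρ : RightAction G Aᵣ) (lam : LeftAction G B) :
    { t : A × Aᵣ × B // G.s t.1 = ρ.anchor t.2.1 ∧ ρ.anchor t.2.1 = lam.anchor t.2.2 } →
      { p : Aᵣ × B // ρ.anchor p.1 = lam.anchor p.2 } ×
        { p : Aᵣ × B // ρ.anchor p.1 = lam.anchor p.2 } :=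
  fun t =>
    (⟨(ρ.act t.1.2.1 (G.inv t.1.1), lam.act t.1.1 t.1.2.2), by
        rw [ρ.anchor_act _ _ (t.2.1.symm.trans (G.r_inv _).symm), G.s_inv,
          lam.anchor_act _ _ (t.2.1.trans t.2.2)]⟩,
      ⟨t.1.2, t.2.2⟩)

open Filter

theorem EtaleGroupoid.inv_inv (g : A) : G.inv (G.inv g) = g := by
  have h1 : G.s g = G.r (G.inv g) := (G.r_inv g).symm
  have h2 : G.s (G.inv g) = G.r (G.inv (G.inv g)) := (G.r_inv _).symm
  calc G.inv (G.inv g)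
      = G.mul (G.unit (G.r g)) (G.inv (G.inv g)) := by
        have := G.unit_mul (G.inv (G.inv g))
        rw [G.r_inv, G.s_inv] at this
        exact this.symm
    _ = G.mul (G.mul g (G.inv g)) (G.inv (G.inv g)) := by rw [G.mul_inv]
    _ = G.mul g (G.mul (G.inv g) (G.inv (G.inv g))) := G.mul_assoc _ _ _ h1 h2
    _ = g := by rw [G.mul_inv, G.r_inv, G.mul_unit]

theorem continuous_diagonalPairMap (ρ : RightAction G Aᵣ) (lam : LeftAction G B) :
    Continuous (diagonalPairMap ρ lam) := by
  have hg : Continuous fun t :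
      { t : A × Aᵣ × B // G.s t.1 = ρ.anchor t.2.1 ∧ ρ.anchor t.2.1 = lam.anchor t.2.2 } =>
      t.1.1 := (continuous_fst.comp continuous_subtype_val)
  have ha : Continuous fun t :
      { t : A × Aᵣ × B // G.s t.1 = ρ.anchor t.2.1 ∧ ρ.anchor t.2.1 = lam.anchor t.2.2 } =>
      t.1.2.1 := (continuous_fst.comp (continuous_snd.comp continuous_subtype_val))
  have hb : Continuous fun t :
      { t : A × Aᵣ × B // G.s t.1 = ρ.anchor t.2.1 ∧ ρ.anchor t.2.1 = lam.anchor t.2.2 } =>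
      t.1.2.2 := (continuous_snd.comp (continuous_snd.comp continuous_subtype_val))
  have c1 : Continuous fun t :
      { t : A × Aᵣ × B // G.s t.1 = ρ.anchor t.2.1 ∧ ρ.anchor t.2.1 = lam.anchor t.2.2 } =>
      ρ.act t.1.2.1 (G.inv t.1.1) := by
    have : Continuous fun t :
        { t : A × Aᵣ × B // G.s t.1 = ρ.anchor t.2.1 ∧ ρ.anchor t.2.1 = lam.anchor t.2.2 } =>
        (⟨(t.1.2.1, G.inv t.1.1), t.2.1.symm.trans (G.r_inv _).symm⟩ :
          { p : Aᵣ × A // ρ.anchor p.1 = G.r p.2 }) :=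
      Continuous.subtype_mk (ha.prodMk (G.continuous_inv.comp hg)) _
    exact ρ.continuous_act.comp this
  have c2 : Continuous fun t :
      { t : A × Aᵣ × B // G.s t.1 = ρ.anchor t.2.1 ∧ ρ.anchor t.2.1 = lam.anchor t.2.2 } =>
      lam.act t.1.1 t.1.2.2 := by
    have : Continuous fun t :
        { t : A × Aᵣ × B // G.s t.1 = ρ.anchor t.2.1 ∧ ρ.anchor t.2.1 = lam.anchor t.2.2 } =>
        (⟨(t.1.1, t.1.2.2), t.2.1.trans t.2.2⟩ :
          { p : A × B // G.s p.1 = lam.anchor p.2 }) :=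
      Continuous.subtype_mk (hg.prodMk hb) _
    exact lam.continuous_act.comp this
  exact Continuous.prodMk
    (Continuous.subtype_mk (c1.prodMk c2) _)
    (Continuous.subtype_mk (ha.prodMk hb) _)

/-- If a right `G`-action on `A` is proper and `B` is a Hausdorff left `G`-space,
then the diagonal `G`-action `g·(a,b) = (a·g⁻¹, g·b)` on `A ×_{s,G⁰,r} B` is
proper. -/
theorem diagonal_action_proper
    (ρ : RightAction G Aᵣ) (lam : LeftAction G B) [T2Space B]
    (hproper : ρ.IsProper) :
    IsProperMap (diagonalPairMap ρ lam) := by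
  rw [isProperMap_iff_ultrafilter]
  refine ⟨continuous_diagonalPairMap ρ lam, ?_⟩
  rintro 𝒰 ⟨⟨⟨a₁, b₁⟩, h₁⟩, ⟨⟨a₂, b₂⟩, h₂⟩⟩ hconv
  -- component convergences
  have c1 : Tendsto (fun t :
      { t : A × Aᵣ × B // G.s t.1 = ρ.anchor t.2.1 ∧ ρ.anchor t.2.1 = lam.anchor t.2.2 } =>
      ρ.act t.1.2.1 (G.inv t.1.1)) 𝒰 (𝓝 a₁) := by
    have : Continuous fun q : { p : Aᵣ × B // ρ.anchor p.1 = lam.anchor p.2 } ×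
        { p : Aᵣ × B // ρ.anchor p.1 = lam.anchor p.2 } => (q.1 : Aᵣ × B).1 :=
      continuous_fst.comp (continuous_subtype_val.comp continuous_fst)
    exact (this.tendsto _).comp hconv
  have c2 : Tendsto (fun t :
      { t : A × Aᵣ × B // G.s t.1 = ρ.anchor t.2.1 ∧ ρ.anchor t.2.1 = lam.anchor t.2.2 } =>
      lam.act t.1.1 t.1.2.2) 𝒰 (𝓝 b₁) := by
    have : Continuous fun q : { p : Aᵣ × B // ρ.anchor p.1 = lam.anchor p.2 } ×
        { p : Aᵣ × B // ρ.anchor p.1 = lam.anchor p.2 } => (q.1 : Aᵣ × B).2 :=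
      continuous_snd.comp (continuous_subtype_val.comp continuous_fst)
    exact (this.tendsto _).comp hconv
  have c3 : Tendsto (fun t :
      { t : A × Aᵣ × B // G.s t.1 = ρ.anchor t.2.1 ∧ ρ.anchor t.2.1 = lam.anchor t.2.2 } =>
      t.1.2.1) 𝒰 (𝓝 a₂) := by
    have : Continuous fun q : { p : Aᵣ × B // ρ.anchor p.1 = lam.anchor p.2 } ×
        { p : Aᵣ × B // ρ.anchor p.1 = lam.anchor p.2 } => (q.2 : Aᵣ × B).1 :=
      continuous_fst.comp (continuous_subtype_val.comp continuous_snd)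
    exact (this.tendsto _).comp hconv
  have c4 : Tendsto (fun t :
      { t : A × Aᵣ × B // G.s t.1 = ρ.anchor t.2.1 ∧ ρ.anchor t.2.1 = lam.anchor t.2.2 } =>
      t.1.2.2) 𝒰 (𝓝 b₂) := by
    have : Continuous fun q : { p : Aᵣ × B // ρ.anchor p.1 = lam.anchor p.2 } ×
        { p : Aᵣ × B // ρ.anchor p.1 = lam.anchor p.2 } => (q.2 : Aᵣ × B).2 :=
      continuous_snd.comp (continuous_subtype_val.comp continuous_snd)
    exact (this.tendsto _).comp hconv
  -- use properness of ρ
  set φ : { t : A × Aᵣ × B // G.s t.1 = ρ.anchor t.2.1 ∧ ρ.anchor t.2.1 = lam.anchor t.2.2 } →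
      { p : Aᵣ × A // ρ.anchor p.1 = G.r p.2 } :=
    fun t => ⟨(t.1.2.1, G.inv t.1.1), t.2.1.symm.trans (G.r_inv _).symm⟩ with hφ
  rw [RightAction.IsProper, isProperMap_iff_ultrafilter] at hproper
  have hpm : Tendsto ρ.pairMap (𝒰.map φ) (𝓝 (a₁, a₂)) := by
    rw [Ultrafilter.coe_map, Filter.tendsto_map'_iff]
    exact c1.prodMk_nhds c3
  obtain ⟨⟨⟨x, h⟩, hxh⟩, heq, hle⟩ := hproper.2 hpm
  have hx1 : ρ.act x h = a₁ := congrArg Prod.fst heq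
  have hx2 : x = a₂ := congrArg Prod.snd heq
  subst hx2
  -- g⁻¹ → h, hence g → h⁻¹
  have hvle : Tendsto (fun t => (φ t : Aᵣ × A)) 𝒰 (𝓝 (x, h)) := by
    simpa only [Function.comp_def] using (continuous_subtype_val.tendsto _).comp hle
  have cginv : Tendsto (fun t :
      { t : A × Aᵣ × B // G.s t.1 = ρ.anchor t.2.1 ∧ ρ.anchor t.2.1 = lam.anchor t.2.2 } =>
      G.inv t.1.1) 𝒰 (𝓝 h) := (continuous_snd.tendsto _).comp hvle
  have cg : Tendsto (fun t :
      { t : A × Aᵣ × B // G.s t.1 = ρ.anchor t.2.1 ∧ ρ.anchor t.2.1 = lam.anchor t.2.2 } =>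
      t.1.1) 𝒰 (𝓝 (G.inv h)) := by
    have := (G.continuous_inv.tendsto h).comp cginv
    simpa only [Function.comp_def, G.inv_inv] using this
  -- anchors
  have hb2 : G.s (G.inv h) = lam.anchor b₂ := by rw [G.s_inv, ← hxh, h₂]
  -- g·b → h⁻¹·b₂
  have cact : Tendsto (fun t :
      { t : A × Aᵣ × B // G.s t.1 = ρ.anchor t.2.1 ∧ ρ.anchor t.2.1 = lam.anchor t.2.2 } =>
      lam.act t.1.1 t.1.2.2) 𝒰 (𝓝 (lam.act (G.inv h) b₂)) := by
    have hψ : Tendsto (fun t :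
        { t : A × Aᵣ × B // G.s t.1 = ρ.anchor t.2.1 ∧ ρ.anchor t.2.1 = lam.anchor t.2.2 } =>
        (⟨(t.1.1, t.1.2.2), t.2.1.trans t.2.2⟩ : { p : A × B // G.s p.1 = lam.anchor p.2 }))
        𝒰 (𝓝 ⟨(G.inv h, b₂), hb2⟩) := by
      rw [tendsto_subtype_rng]
      exact cg.prodMk_nhds c4
    exact (lam.continuous_act.tendsto _).comp hψ
  have hb1 : lam.act (G.inv h) b₂ = b₁ := tendsto_nhds_unique cact c2
  refine ⟨⟨(G.inv h, x, b₂), ⟨?_, h₂⟩⟩, ?_, ?_⟩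
  · rw [G.s_inv, hxh]
  · refine Prod.ext (Subtype.ext ?_) (Subtype.ext rfl)
    show (ρ.act x (G.inv (G.inv h)), lam.act (G.inv h) b₂) = (a₁, b₁)
    rw [G.inv_inv, hx1, hb1]
  · rw [nhds_subtype_eq_comap, ← Filter.map_le_iff_le_comap]
    exact cg.prodMk_nhds (c3.prodMk_nhds c4)

end Statement8
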